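/- Entropy bound for the net 𝒫ⁿ_{k,ε} (Theorem 10.3): For all positive integers n and k and every real 0 < ε ≤ 1, ln(card 𝒫ⁿ_{k,ε}) ≤ (2k+1)ⁿ · ln(22·n·k); equivalently, card 𝒫ⁿ_{k,ε} ≤ (22·n·k)^{(2k+1)ⁿ}. -/

import Mathlib

noncomputable section

/-- The grid `Σ_k = [-1,1]ⁿ ∩ (1/k)·ℤⁿ` of the cube of mesh `1/k`. -/
def grid (n k : ℕ) : Set (EuclideanSpace ℝ (Fin n)) :=
  {x | (∀ i, |x i| ≤ 1) ∧ ∀ i, ∃ m : ℤ, x i = m / k}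

/-- Mass of a finitely supported function `θ : ℝⁿ → ℝ`, identified with the atomic
signed measure `Σ_x θ(x)·δ_x`: `M(θ) = Σ_x |θ(x)|`. -/
def massF (n : ℕ) (θ : EuclideanSpace ℝ (Fin n) →₀ ℝ) : ℝ :=
  ∑ x ∈ θ.support, |θ x|

/-- Dual Lipschitz norm of a finitely supported function `θ : ℝⁿ → ℝ`:
`G(θ) = sup { Σ_x θ(x)·φ(x) : φ 1-Lipschitz }`. -/
def GF (n : ℕ) (θ : EuclideanSpace ℝ (Fin n) →₀ ℝ) : ℝ :=
  sSup {r : ℝ | ∃ φ : EuclideanSpace ℝ (Fin n) → ℝ,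
    LipschitzWith 1 φ ∧ r = ∑ x ∈ θ.support, θ x * φ x}

/-- The net `𝒫ⁿ_{k,ε}`: finitely supported functions carried by the grid `Σ_k`,
with values in `ε̂·ℤ` where `ε̂ = ε/(2n(2k+1)ⁿ)`, total sum `0`, and mass at most
`k·ε`. -/
def Pset (n k : ℕ) (ε : ℝ) : Set (EuclideanSpace ℝ (Fin n) →₀ ℝ) :=
  {θ | ↑θ.support ⊆ grid n k ∧
    (∀ x, ∃ m : ℤ, θ x = (ε / (2 * n * (2 * k + 1) ^ n)) * m) ∧
    ∑ x ∈ θ.support, θ x = 0 ∧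
    ∑ x ∈ θ.support, |θ x| ≤ k * ε}

/-- Entropy bound for the net `𝒫ⁿ_{k,ε}` (Theorem 10.3):
`ln(card 𝒫ⁿ_{k,ε}) ≤ (2k+1)ⁿ · ln(22nk)`; equivalently
`card 𝒫ⁿ_{k,ε} ≤ (22nk)^{(2k+1)ⁿ}`. -/
-- auxiliary material
lemma key_choose (a N : ℕ) (hN : 1 ≤ N) (c : ℝ) (hc : ((a:ℝ)+1) * Real.exp 1 ≤ c) :
    ((((a+1)*N).choose N : ℕ) : ℝ) ≤ c ^ N := by
  have hfac : (0:ℝ) < (N.factorial : ℝ) := by positivity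
  have h1 : ((((a+1)*N).choose N : ℕ) : ℝ) * N.factorial ≤ (((a+1):ℝ)*N) ^ N := by
    have := Nat.descFactorial_le_pow ((a+1)*N) N
    rw [Nat.descFactorial_eq_factorial_mul_choose] at this
    calc ((((a+1)*N).choose N : ℕ) : ℝ) * N.factorial
        = ((N.factorial * ((a+1)*N).choose N : ℕ) : ℝ) := by push_cast; ring
      _ ≤ ((((a+1)*N)^N : ℕ) : ℝ) := by exact_mod_cast this
      _ = (((a+1):ℝ)*N) ^ N := by push_cast; ring
  have h2 : ((N:ℝ)) ^ N ≤ N.factorial * Real.exp 1 ^ N := by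
    have := Real.pow_div_factorial_le_exp (N:ℝ) (by positivity) N
    rw [div_le_iff₀ hfac] at this
    calc ((N:ℝ))^N ≤ Real.exp N * N.factorial := this
      _ = N.factorial * Real.exp 1 ^ N := by
          rw [← Real.exp_nat_mul]; ring_nf
  have hNpos : (0:ℝ) < (N:ℝ)^N := by positivity
  have hc0 : (0:ℝ) ≤ ((a:ℝ)+1) * Real.exp 1 := by positivity
  calc ((((a+1)*N).choose N : ℕ) : ℝ)
      ≤ (((a+1):ℝ)*N) ^ N / N.factorial := by rw [le_div_iff₀ hfac]; exact h1
    _ = ((a:ℝ)+1)^N * ((N:ℝ)^N / N.factorial) := by rw [mul_pow]; ring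
    _ ≤ ((a:ℝ)+1)^N * Real.exp 1 ^ N := by
        gcongr
        rw [div_le_iff₀ hfac]  -- N^N / N! ≤ exp 1 ^N
        calc ((N:ℝ))^N ≤ N.factorial * Real.exp 1 ^ N := h2
          _ = Real.exp 1 ^ N * N.factorial := by ring
    _ = (((a:ℝ)+1) * Real.exp 1) ^ N := by rw [← mul_pow]
    _ ≤ c ^ N := by gcongr

def gridF (n k : ℕ) : Finset (EuclideanSpace ℝ (Fin n)) :=
  @Finset.image _ _ (Classical.decEq _)
    (fun m : Fin n → ℤ => (WithLp.toLp 2 (fun i => (m i : ℝ) / k) : EuclideanSpace ℝ (Fin n)))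
    (Fintype.piFinset (fun _ : Fin n => Finset.Icc (-(k:ℤ)) (k:ℤ)))

lemma coe_gridF {n k : ℕ} (hk : 0 < k) :
    (↑(gridF n k) : Set (EuclideanSpace ℝ (Fin n))) = grid n k := by
  have hk' : (0:ℝ) < (k:ℝ) := by exact_mod_cast hk
  ext x
  simp only [gridF, Finset.coe_image, Set.mem_image, Finset.mem_coe,
    Fintype.mem_piFinset, Finset.mem_Icc, grid, Set.mem_setOf_eq]
  constructor
  · rintro ⟨m, hm, rfl⟩
    refine ⟨fun i => ?_, fun i => ⟨m i, rfl⟩⟩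
    rw [abs_div, abs_of_pos hk', div_le_one hk']
    have habs : |m i| ≤ (k:ℤ) := abs_le.2 ⟨(hm i).1, (hm i).2⟩
    calc |((m i : ℤ) : ℝ)| = ((|m i| : ℤ) : ℝ) := by rw [Int.cast_abs]
      _ ≤ ((k:ℤ):ℝ) := by exact_mod_cast habs
      _ = (k:ℝ) := by norm_num
  · rintro ⟨h1, h2⟩
    choose m hm using h2
    refine ⟨m, fun i => ?_, ?_⟩
    · have hx := h1 i
      rw [hm i, abs_div, abs_of_pos hk', div_le_one hk'] at hx
      have habs : |m i| ≤ (k:ℤ) := by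
        have h' : |((m i : ℤ) : ℝ)| ≤ ((k:ℤ):ℝ) := by rw [Int.cast_natCast]; exact hx
        rw [← Int.cast_abs] at h'
        exact_mod_cast h'
      rw [abs_le] at habs
      exact ⟨habs.1, habs.2⟩
    · ext i
      exact (hm i).symm

lemma card_gridF {n k : ℕ} : (gridF n k).card ≤ (2*k+1)^n := by
  unfold gridF
  refine le_trans (@Finset.card_image_le _ _ _ _ (Classical.decEq _)) ?_
  rw [Fintype.card_piFinset]
  have : ∏ _i : Fin n, (Finset.Icc (-(k:ℤ)) (k:ℤ)).card = (2*k+1)^n := by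
    simp only [Int.card_Icc, Finset.prod_const, Finset.card_univ, Fintype.card_fin]
    congr 1
    omega
  omega

def encode (m : ℤ) : ℕ := if 0 ≤ m then 2 * m.natAbs else 2 * m.natAbs - 1

lemma encode_inj : Function.Injective encode := by
  intro a b h
  unfold encode at h
  split_ifs at h <;> omega

lemma encode_le (m : ℤ) : encode m ≤ 2 * m.natAbs := by
  unfold encode; split_ifs <;> omega


lemma card_Pset_le (n k : ℕ) (hn : 0 < n) (hk : 0 < k) (ε : ℝ) (hε0 : 0 < ε) :
    Nat.card ↥(Pset n k ε) ≤
      ((2*k+1)^n + 4*n*k*(2*k+1)^n).choose (4*n*k*(2*k+1)^n) := by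
  classical
  set N : ℕ := (2*k+1)^n with hN
  set S : ℕ := 4*n*k*N with hS
  set G : Finset (EuclideanSpace ℝ (Fin n)) := gridF n k with hG
  set εh : ℝ := ε / (2 * n * (2 * k + 1) ^ n) with hεh
  have hεhpos : 0 < εh := by
    apply div_pos hε0
    positivity
  have hmval : ∀ θ : ↥(Pset n k ε), ∀ x, ∃ m : ℤ,
      (θ : EuclideanSpace ℝ (Fin n) →₀ ℝ) x = εh * m :=
    fun θ x => θ.2.2.1 x
  choose mval hmspec using hmval
  have hsupp : ∀ θ : ↥(Pset n k ε), (θ : EuclideanSpace ℝ (Fin n) →₀ ℝ).support ⊆ G := by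
    intro θ
    rw [← Finset.coe_subset, hG, coe_gridF hk]
    exact θ.2.1
  have hT : ∀ θ : ↥(Pset n k ε), ∑ x : ↥G, encode (mval θ x.1) ≤ S := by
    intro θ
    have h1 : ∑ x ∈ G, |(θ : EuclideanSpace ℝ (Fin n) →₀ ℝ) x| ≤ k * ε := by
      rw [← Finset.sum_subset (hsupp θ) (by
        intro x _ hx
        rw [Finsupp.notMem_support_iff.mp hx, abs_zero])]
      exact θ.2.2.2.2
    have h2 : ∀ x, |(θ : EuclideanSpace ℝ (Fin n) →₀ ℝ) x| = εh * ((mval θ x).natAbs : ℝ) := by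
      intro x
      rw [hmspec θ x, abs_mul, abs_of_pos hεhpos]
      congr 1
      rw [← Int.cast_abs, Int.abs_eq_natAbs, Int.cast_natCast]
    have h3 : εh * ∑ x ∈ G, ((mval θ x).natAbs : ℝ) ≤ k * ε := by
      rw [Finset.mul_sum]
      simp_rw [← h2]
      exact h1
    have hratio : (k:ℝ) * ε / εh = 2*n*k*(2*(k:ℝ)+1)^n := by
      rw [hεh]
      field_simp
    have h4 : (∑ x ∈ G, ((mval θ x).natAbs : ℝ)) ≤ 2*n*k*(2*(k:ℝ)+1)^n := by
      rw [← hratio, le_div_iff₀' hεhpos]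
      exact h3
    have h5 : ∑ x ∈ G, (mval θ x).natAbs ≤ 2*n*k*N := by
      have hcast : ((2*n*k*N : ℕ) : ℝ) = 2*n*k*(2*(k:ℝ)+1)^n := by
        rw [hN]; push_cast; ring
      rw [← hcast] at h4
      exact_mod_cast h4
    have h6 : ∑ x : ↥G, encode (mval θ x.1) = ∑ x ∈ G, encode (mval θ x) :=
      Finset.sum_coe_sort G (fun x => encode (mval θ x))
    have h7 : ∑ x ∈ G, encode (mval θ x) ≤ ∑ x ∈ G, 2 * (mval θ x).natAbs :=
      Finset.sum_le_sum (fun x _ => encode_le _)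
    have h8 : ∑ x ∈ G, 2 * (mval θ x).natAbs = 2 * ∑ x ∈ G, (mval θ x).natAbs :=
      (Finset.mul_sum _ _ _).symm
    have h9 : S = 2 * (2*n*k*N) := by rw [hS]; ring
    omega
  set g : ↥(Pset n k ε) → Option ↥G → ℕ :=
    fun θ o => o.elim (S - ∑ x : ↥G, encode (mval θ x.1)) (fun x => encode (mval θ x.1)) with hg
  have hgsum : ∀ θ, ∑ o : Option ↥G, g θ o = S := by
    intro θ
    rw [Fintype.sum_option]
    have := hT θ
    simp only [hg, Option.elim]
    omega
  set F : ↥(Pset n k ε) → Sym (Option ↥G) S :=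
    fun θ => ⟨Finsupp.toMultiset (Finsupp.equivFunOnFinite.symm (g θ)), by
      rw [Finsupp.card_toMultiset, Finsupp.sum_fintype _ _ (fun _ => rfl)]
      simpa using hgsum θ⟩ with hF
  have hFinj : Function.Injective F := by
    intro θ θ' h
    have h0 := congrArg Subtype.val h
    simp only [hF] at h0
    have hval : ∀ x ∈ G, (θ : EuclideanSpace ℝ (Fin n) →₀ ℝ) x
        = (θ' : EuclideanSpace ℝ (Fin n) →₀ ℝ) x := by
      intro x hx
      have h1 := congrArg (Multiset.count (some (⟨x, hx⟩ : ↥G))) h0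
      rw [Finsupp.count_toMultiset, Finsupp.count_toMultiset] at h1
      simp only [Finsupp.coe_equivFunOnFinite_symm, hg, Option.elim] at h1
      have hmeq := encode_inj h1
      rw [hmspec θ x, hmspec θ' x, hmeq]
    apply Subtype.ext
    apply Finsupp.ext
    intro x
    by_cases hx : x ∈ G
    · exact hval x hx
    · have h1 : (θ : EuclideanSpace ℝ (Fin n) →₀ ℝ) x = 0 :=
        Finsupp.notMem_support_iff.mp (fun hc => hx (hsupp θ hc))
      have h2 : (θ' : EuclideanSpace ℝ (Fin n) →₀ ℝ) x = 0 :=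
        Finsupp.notMem_support_iff.mp (fun hc => hx (hsupp θ' hc))
      rw [h1, h2]
  have hcard1 : Nat.card ↥(Pset n k ε) ≤ Nat.card (Sym (Option ↥G) S) :=
    Nat.card_le_card_of_injective F hFinj
  have hcard2 : Nat.card (Sym (Option ↥G) S) = (G.card + S).choose S := by
    rw [Nat.card_eq_fintype_card, Sym.card_sym_eq_choose, Fintype.card_option,
      Fintype.card_coe]
    congr 1
    omega
  have hcard3 : (G.card + S).choose S ≤ (N + S).choose S :=
    Nat.choose_le_choose S (Nat.add_le_add_right (hG ▸ (hN ▸ @card_gridF n k)) S)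
  rw [hcard2] at hcard1
  exact hcard1.trans hcard3

theorem stmt18 (n k : ℕ) (hn : 0 < n) (hk : 0 < k)
    (ε : ℝ) (hε0 : 0 < ε) (hε1 : ε ≤ 1) :
    Real.log (Nat.card ↥(Pset n k ε)) ≤
        ((2 * k + 1) ^ n : ℝ) * Real.log (22 * n * k) ∧
      Nat.card ↥(Pset n k ε) ≤ (22 * n * k) ^ ((2 * k + 1) ^ n) := by
  set N : ℕ := (2*k+1)^n with hN
  have hN1 : 1 ≤ N := Nat.one_le_pow _ _ (by omega)
  have hc : (((4*n*k : ℕ):ℝ)+1) * Real.exp 1 ≤ ((22*n*k : ℕ):ℝ) := by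
    have h1 : (1:ℝ) ≤ (n:ℝ) := by exact_mod_cast hn
    have h2 : (1:ℝ) ≤ (k:ℝ) := by exact_mod_cast hk
    have he := Real.exp_one_lt_d9
    push_cast
    nlinarith [mul_le_mul h1 h2 (by norm_num) (by linarith), Real.exp_pos 1]
  have hkey := key_choose (4*n*k) N hN1 _ hc
  have hsymm : ((4*n*k+1)*N).choose (4*n*k*N) = ((4*n*k+1)*N).choose N := by
    have h1 : N ≤ (4*n*k+1)*N := Nat.le_mul_of_pos_left N (by omega)
    have h2 : (4*n*k+1)*N - N = 4*n*k*N := by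
      have : (4*n*k+1)*N = 4*n*k*N + N := by ring
      omega
    rw [← h2, Nat.choose_symm h1]
  have hchain : Nat.card ↥(Pset n k ε) ≤ (22*n*k)^N := by
    have h1 := card_Pset_le n k hn hk ε hε0
    have h2 : (2*k+1)^n + 4*n*k*(2*k+1)^n = (4*n*k+1)*N := by rw [hN]; ring
    have h3 : 4*n*k*(2*k+1)^n = 4*n*k*N := by rw [hN]
    rw [h2, h3, hsymm] at h1
    have h4 : ((4*n*k+1)*N).choose N ≤ (22*n*k)^N := by
      exact_mod_cast hkey
    exact h1.trans h4
  constructor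
  · rcases Nat.eq_zero_or_pos (Nat.card ↥(Pset n k ε)) with h0 | hpos
    · rw [h0]
      simp only [Nat.cast_zero, Real.log_zero]
      apply mul_nonneg (by positivity)
      apply Real.log_nonneg
      have h1 : (1:ℝ) ≤ (n:ℝ) := by exact_mod_cast hn
      have h2 : (1:ℝ) ≤ (k:ℝ) := by exact_mod_cast hk
      nlinarith
    · have hle : ((Nat.card ↥(Pset n k ε) : ℕ):ℝ) ≤ (((22*n*k)^N : ℕ):ℝ) := by exact_mod_cast hchain
      have := Real.log_le_log (by exact_mod_cast hpos) hle
      refine this.trans_eq ?_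
      rw [show (((22*n*k)^N : ℕ):ℝ) = ((22*(n:ℝ)*(k:ℝ)))^N by push_cast; ring]
      rw [Real.log_pow, hN]
      push_cast
      ring
  · exact hchain
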